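/- Let F be an arbitrary field and V an n-dimensional vector space over F. Let U_1, …, U_m be r-dimensional linear subspaces of V and V_1, …, V_m be s-dimensional linear subspaces of V such that U_i ∩ V_i = {0} for each 1 ≤ i ≤ m and U_i ∩ V_j ≠ {0} whenever 1 ≤ i < j ≤ m. Then m ≤ C(r + s, r), where C(a, b) denotes the binomial coefficient. -/

import Mathlib

open Matrix

section MatrixLemmas
variable {K : Type*} [Field K]

/-- A finite linear combination of the rows of a matrix is a `vecMul`. -/
private lemma sum_smul_rows_eq_vecMul {k d : ℕ} (M : Matrix (Fin k) (Fin d) K) (g : Fin k → K) :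
    ∑ i, g i • M i = g ᵥ* M := by
  funext j
  simp [Matrix.vecMul, dotProduct, Finset.sum_apply]

/-- Rows of a matrix with a right inverse are linearly independent. -/
private lemma rows_linearIndependent_of_right_inverse {k d : ℕ} (M : Matrix (Fin k) (Fin d) K)
    (N : Matrix (Fin d) (Fin k) K) (h : M * N = 1) :
    LinearIndependent K (fun i => M i) := by
  rw [Fintype.linearIndependent_iff]
  intro g hg i
  have h1 : g ᵥ* M = 0 := by rw [← sum_smul_rows_eq_vecMul]; exact hg
  have h2 : g ᵥ* (M * N) = 0 := by rw [← Matrix.vecMul_vecMul, h1, Matrix.zero_vecMul]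
  rw [h, Matrix.vecMul_one] at h2
  exact congrFun h2 i

/-- A matrix with linearly independent rows has a right inverse. -/
private lemma exists_right_inverse_of_rows_linearIndependent {k d : ℕ}
    (M : Matrix (Fin k) (Fin d) K) (h : LinearIndependent K (fun i => M i)) :
    ∃ N : Matrix (Fin d) (Fin k) K, M * N = 1 := by
  have hrank : M.rank = k := by
    simpa using h.rank_matrix
  have hsurj : Function.Surjective M.mulVecLin := by
    rw [← LinearMap.range_eq_top]
    apply Submodule.eq_top_of_finrank_eq
    rw [show Module.finrank K (LinearMap.range M.mulVecLin) = M.rank from rfl, hrank]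
    simp [Module.finrank_pi]
  choose x hx using fun j : Fin k => hsurj (Pi.single j 1)
  refine ⟨Matrix.of fun t j => x j t, ?_⟩
  ext i j
  have : (M.mulVecLin (x j)) i = Pi.single (M := fun _ => K) j 1 i := by rw [hx j]
  simpa [Matrix.mulVecLin, Matrix.mul_apply, Matrix.mulVec, dotProduct,
    Matrix.one_apply, Pi.single_apply, eq_comm] using this

end MatrixLemmas

section Transfer
variable {F K : Type*} [Field F] [Field K]

/-- Linear independence of a finite family of coordinate vectors transfers along a
field homomorphism. -/
private lemma linearIndependent_map_ringHom {k d : ℕ} (f : F →+* K) {a : Fin k → Fin d → F}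
    (h : LinearIndependent F a) :
    LinearIndependent K (fun i => f ∘ a i) := by
  obtain ⟨N, hN⟩ := exists_right_inverse_of_rows_linearIndependent (Matrix.of a) h
  have h1 : (Matrix.of a).map f * N.map f = 1 := by
    rw [← Matrix.map_mul, hN, Matrix.map_one f f.map_zero f.map_one]
  exact rows_linearIndependent_of_right_inverse _ _ h1

/-- Linear dependence of a finite family of coordinate vectors transfers along a
field homomorphism. -/
private lemma not_linearIndependent_map_ringHom {k d : ℕ} (f : F →+* K) {a : Fin k → Fin d → F}
    (h : ¬ LinearIndependent F a) :
    ¬ LinearIndependent K (fun i => f ∘ a i) := by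
  rw [Fintype.not_linearIndependent_iff] at h ⊢
  obtain ⟨g, hg, i0, hi0⟩ := h
  refine ⟨fun i => f (g i), ?_, i0, fun hc => hi0 ?_⟩
  · funext j
    have hj := congrFun hg j
    simp only [Finset.sum_apply, Pi.smul_apply, smul_eq_mul, Pi.zero_apply] at hj ⊢
    calc ∑ i, f (g i) * (f ∘ a i) j = f (∑ i, g i * a i j) := by
          rw [map_sum]; simp [Function.comp]
      _ = 0 := by rw [hj, f.map_zero]
  · exact f.injective (by simpa using hc)

end Transfer

section Generic
variable {K : Type*} [Field K]

/-- Over an infinite field, finitely many matrices with right inverses admit a common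
"generic" right factor making all products invertible. -/
private lemma exists_common_generic [Infinite K] {m' d n' : ℕ}
    (M : Fin m' → Matrix (Fin d) (Fin n') K)
    (h : ∀ i, ∃ N : Matrix (Fin n') (Fin d) K, M i * N = 1) :
    ∃ C : Matrix (Fin n') (Fin d) K, ∀ i, (M i * C).det ≠ 0 := by
  classical
  set R := MvPolynomial (Fin n' × Fin d) K
  set X : Matrix (Fin n') (Fin d) R := Matrix.of fun p q => MvPolynomial.X (p, q) with hX
  set P : R := ∏ i, ((M i).map MvPolynomial.C * X : Matrix (Fin d) (Fin d) R).det with hP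
  have key : ∀ (c : Fin n' × Fin d → K) (i),
      MvPolynomial.eval c (((M i).map MvPolynomial.C * X : Matrix (Fin d) (Fin d) R).det)
        = (M i * Matrix.of fun p q => c (p, q)).det := by
    intro c i
    rw [RingHom.map_det]
    congr 1
    show ((M i).map MvPolynomial.C * X : Matrix (Fin d) (Fin d) R).map (MvPolynomial.eval c) = _
    erw [Matrix.map_mul]
    congr 1
    · ext p q
      simp [Matrix.map_apply]
      exact MvPolynomial.eval_C _
    · ext p q
      simp [hX, Matrix.map_apply]
      exact MvPolynomial.eval_X _
  have hP0 : P ≠ 0 := by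
    rw [hP]
    refine Finset.prod_ne_zero_iff.2 fun i _ => fun hz => ?_
    obtain ⟨N, hN⟩ := h i
    have hk := key (fun p => N p.1 p.2) i
    rw [hz] at hk
    have hMN : (M i * Matrix.of fun p q => N p q) = 1 := by
      convert hN
      rfl
    rw [hMN] at hk
    simp at hk
  have hne : ¬ ∀ c : Fin n' × Fin d → K, MvPolynomial.eval c P = 0 := by
    intro hall
    exact hP0 (MvPolynomial.funext fun c => by rw [hall c]; simp)
  push_neg at hne
  obtain ⟨c, hc⟩ := hne
  refine ⟨Matrix.of fun p q => c (p, q), fun i => ?_⟩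
  rw [← key c i]
  intro hz
  apply hc
  rw [hP, map_prod]
  exact Finset.prod_eq_zero (Finset.mem_univ i) hz

end Generic

section StackAlt
variable {K : Type*} [Field K] {r s : ℕ}

private lemma stack_update [DecidableEq (Fin s)] (g : Fin r → (Fin (r + s) → K))
    (v : Fin s → (Fin (r + s) → K)) (l : Fin s) (x : Fin (r + s) → K) :
    Matrix.of (Fin.append g (Function.update v l x))
      = Matrix.updateRow (Matrix.of (Fin.append g v)) (Fin.natAdd r l) x := by
  have hne : ∀ k : Fin r, Fin.castAdd s k ≠ Fin.natAdd r l := by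
    intro k
    intro hc
    have := congrArg Fin.val hc
    simp only [Fin.coe_castAdd, Fin.coe_natAdd] at this
    omega
  ext k j
  refine Fin.addCases (fun k => ?_) (fun k => ?_) k
  · rw [Matrix.updateRow_ne (hne k)]
    simp [Fin.append_left]
  · by_cases hk : k = l
    · subst hk
      rw [Matrix.updateRow_self]
      simp [Fin.append_right]
    · rw [Matrix.updateRow_ne (by simpa [Fin.ext_iff] using fun hc => hk (Fin.ext hc))]
      simp [Fin.append_right, Function.update_of_ne hk]

/-- `v ↦ det (g ++ v)` as an alternating map in the last `s` rows. -/
private noncomputable def stackAlt (g : Fin r → (Fin (r + s) → K)) :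
    AlternatingMap K (Fin (r + s) → K) K (Fin s) where
  toFun v := (Matrix.of (Fin.append g v)).det
  map_update_add' v l x y := by
    simp only [stack_update, Matrix.det_updateRow_add]
  map_update_smul' v l c x := by
    simp only [stack_update, Matrix.det_updateRow_smul, smul_eq_mul]
  map_eq_zero_of_eq' v l1 l2 hv hne := by
    refine Matrix.det_zero_of_row_eq (i := Fin.natAdd r l1) (j := Fin.natAdd r l2)
      (by simpa [Fin.ext_iff] using fun hc => hne (Fin.ext hc)) ?_
    funext j
    simp [Fin.append_right, hv]

private lemma stackAlt_apply (g : Fin r → (Fin (r + s) → K)) (v : Fin s → (Fin (r + s) → K)) :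
    stackAlt g v = (Matrix.of (Fin.append g v)).det := rfl

end StackAlt

section Dimension
variable {K : Type*} [Field K]

/-- A linearly independent family of alternating `s`-forms on `K^d` has size at most
`d.choose s`. -/
private lemma card_le_choose_of_linearIndependent_alternating {m d s : ℕ}
    {φ : Fin m → AlternatingMap K (Fin d → K) K (Fin s)}
    (h : LinearIndependent K φ) : m ≤ d.choose s := by
  classical
  set b := Pi.basisFun K (Fin d) with hb
  set E : AlternatingMap K (Fin d → K) K (Fin s) →ₗ[K]
      ({S : Finset (Fin d) // S.card = s} → K) :=
    { toFun := fun ψ S => ψ (fun l => b (S.1.orderEmbOfFin S.2 l))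
      map_add' := fun ψ ψ' => by funext S; simp
      map_smul' := fun c ψ => by funext S; simp } with hE
  have hinj : Function.Injective E := by
    rw [injective_iff_map_eq_zero]
    intro ψ hψ
    refine Module.Basis.ext_alternating (f := ψ) (g := 0) b fun v hv => ?_
    simp only [AlternatingMap.zero_apply]
    set σ := Tuple.sort v with hσ
    have hmono : Monotone (v ∘ σ) := Tuple.monotone_sort v
    have hinj2 : Function.Injective (v ∘ σ) := hv.comp σ.injective
    have hsm : StrictMono (v ∘ σ) := hmono.strictMono_of_injective hinj2
    set S : Finset (Fin d) := Finset.image (v ∘ σ) Finset.univ with hS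
    have hcard : S.card = s := by
      rw [hS, Finset.card_image_of_injective _ hinj2, Finset.card_univ, Fintype.card_fin]
    have huniq : v ∘ σ = fun l => S.orderEmbOfFin hcard l := by
      have := Finset.orderEmbOfFin_unique hcard
        (f := v ∘ σ) (fun x => Finset.mem_image_of_mem _ (Finset.mem_univ x)) hsm
      funext l
      exact congrFun (congrArg (fun f => (f : Fin s → Fin d)) this) l
    have hval : ψ (fun l => b ((v ∘ σ) l)) = 0 := by
      have := congrFun hψ ⟨S, hcard⟩
      simp only [hE, LinearMap.coe_mk, AddHom.coe_mk, Pi.zero_apply] at this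
      rw [huniq]
      exact this
    have hperm := ψ.map_perm (fun l => b (v l)) σ
    have hz : (Equiv.Perm.sign σ) • ψ (fun l => b (v l)) = 0 := by
      rw [← hperm]
      convert hval using 2
      rfl
    exact (smul_eq_zero_iff_eq _).mp hz
  have h2 : LinearIndependent K (E ∘ φ) :=
    h.map' E (LinearMap.ker_eq_bot.2 hinj)
  have h3 := h2.fintype_card_le_finrank
  rw [Fintype.card_fin] at h3
  refine h3.trans ?_
  rw [Module.finrank_pi, Fintype.card_finset_len, Fintype.card_fin]

end Dimension

section Reduction
variable {F V : Type*} [Field F] [AddCommGroup V] [Module F V] {r s : ℕ}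

private lemma span_range_basis_coe {U : Submodule F V} {ι : Type*} (bU : Module.Basis ι F U) :
    Submodule.span F (Set.range (fun k => (bU k : V))) = U := by
  have h : (fun k => (bU k : V)) = U.subtype ∘ bU := rfl
  rw [h, Set.range_comp, ← Submodule.map_span, bU.span_eq, Submodule.map_top,
    Submodule.range_subtype]

private lemma append_linearIndependent {u : Fin r → V} {w : Fin s → V}
    (hu : LinearIndependent F u) (hw : LinearIndependent F w)
    (hd : Disjoint (Submodule.span F (Set.range u)) (Submodule.span F (Set.range w))) :
    LinearIndependent F (Fin.append u w) := by
  have h := hu.sum_type hw hd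
  have heq : Fin.append u w ∘ finSumFinEquiv = Sum.elim u w := by
    funext p
    cases p with
    | inl i => simp [Fin.append_left]
    | inr j => simp [Fin.append_right]
  rw [← heq] at h
  exact (linearIndependent_equiv finSumFinEquiv).mp h

private lemma append_not_linearIndependent {u : Fin r → V} {w : Fin s → V} {x : V} (hx : x ≠ 0)
    (hxu : x ∈ Submodule.span F (Set.range u)) (hxw : x ∈ Submodule.span F (Set.range w)) :
    ¬ LinearIndependent F (Fin.append u w) := by
  rw [Submodule.mem_span_range_iff_exists_fun] at hxu hxw
  obtain ⟨c, hc⟩ := hxu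
  obtain ⟨e, he⟩ := hxw
  rw [Fintype.not_linearIndependent_iff]
  have hcne : ∃ k, c k ≠ 0 := by
    by_contra hall
    push_neg at hall
    apply hx
    rw [← hc]
    simp [hall]
  obtain ⟨k0, hk0⟩ := hcne
  refine ⟨Fin.append c (fun l => -(e l)), ?_,
    ⟨Fin.castAdd s k0, by simpa [Fin.append_left] using hk0⟩⟩
  rw [Fin.sum_univ_add]
  simp only [Fin.append_left, Fin.append_right, neg_smul]
  rw [Finset.sum_neg_distrib, hc, he]
  simp

end Reduction

set_option synthInstance.maxHeartbeats 1000000 in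
set_option maxHeartbeats 2000000 in
/-- Lovász' subspace version of Bollobás' theorem (Theorem 1.3): if `Uᵢ` are `r`-dimensional
and `Vᵢ` are `s`-dimensional subspaces of an `n`-dimensional vector space over an arbitrary
field with `Uᵢ ∩ Vᵢ = {0}` and `Uᵢ ∩ Vⱼ ≠ {0}` for `i < j`, then `m ≤ C(r + s, r)`. -/
theorem bollobas_subspaces {F V : Type*} [Field F] [AddCommGroup V] [Module F V]
    (n m r s : ℕ) (hdim : Module.finrank F V = n) [FiniteDimensional F V]
    (U W : Fin m → Submodule F V)
    (hU : ∀ i, Module.finrank F (U i) = r)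
    (hW : ∀ i, Module.finrank F (W i) = s)
    (hdisj : ∀ i, U i ⊓ W i = ⊥)
    (hcross : ∀ i j, i < j → U i ⊓ W j ≠ ⊥) :
    m ≤ (r + s).choose r := by
  classical
  -- Step 1: bases of the subspaces, as families of vectors in V
  set ub : ∀ i : Fin m, Module.Basis (Fin r) F (U i) :=
    fun i => (Module.finBasis F (U i)).reindex (finCongr (hU i)) with hub
  set wb : ∀ i : Fin m, Module.Basis (Fin s) F (W i) :=
    fun i => (Module.finBasis F (W i)).reindex (finCongr (hW i)) with hwb
  set u : ∀ _ : Fin m, Fin r → V := fun i k => (ub i k : V) with hu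
  set w : ∀ _ : Fin m, Fin s → V := fun i l => (wb i l : V) with hw
  have hspanu : ∀ i, Submodule.span F (Set.range (u i)) = U i :=
    fun i => span_range_basis_coe (ub i)
  have hspanw : ∀ i, Submodule.span F (Set.range (w i)) = W i :=
    fun i => span_range_basis_coe (wb i)
  have hliu : ∀ i, LinearIndependent F (u i) := fun i =>
    (ub i).linearIndependent.map' (U i).subtype (Submodule.ker_subtype _)
  have hliw : ∀ i, LinearIndependent F (w i) := fun i =>
    (wb i).linearIndependent.map' (W i).subtype (Submodule.ker_subtype _)
  -- Step 2: coordinates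
  set nV := Module.finrank F V with hnV
  set eV : V ≃ₗ[F] (Fin nV → F) := (Module.finBasis F V).equivFun with heV
  set a : Fin m → Fin r → (Fin nV → F) := fun i k => eV (u i k) with ha
  set bb : Fin m → Fin s → (Fin nV → F) := fun j l => eV (w j l) with hbb
  have hcomp : ∀ i j, Fin.append (a i) (bb j) = eV ∘ Fin.append (u i) (w j) := by
    intro i j
    funext p
    refine Fin.addCases (fun k => ?_) (fun l => ?_) p
    · simp [Fin.append_left, ha]
    · simp [Fin.append_right, hbb]
  have h1 : ∀ i, LinearIndependent F (Fin.append (a i) (bb i)) := by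
    intro i
    have hV : LinearIndependent F (Fin.append (u i) (w i)) := by
      refine append_linearIndependent (hliu i) (hliw i) ?_
      rw [hspanu i, hspanw i, disjoint_iff]
      exact hdisj i
    rw [hcomp i i]
    exact hV.map' eV.toLinearMap eV.ker
  have h2 : ∀ i j, i < j → ¬ LinearIndependent F (Fin.append (a i) (bb j)) := by
    intro i j hij
    obtain ⟨x, hxmem, hx0⟩ := Submodule.exists_mem_ne_zero_of_ne_bot (hcross i j hij)
    have hV : ¬ LinearIndependent F (Fin.append (u i) (w j)) := by
      refine append_not_linearIndependent hx0 ?_ ?_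
      · rw [hspanu i]; exact hxmem.1
      · rw [hspanw j]; exact hxmem.2
    rw [hcomp i j]
    intro hcon
    exact hV (hcon.of_comp eV.toLinearMap)
  -- Step 3: base change to the infinite field (RatFunc F) = F(t)
  set f : F →+* RatFunc F := (algebraMap (Polynomial F) (RatFunc F)).comp Polynomial.C with hf
  haveI : Infinite (RatFunc F) :=
    Infinite.of_injective (algebraMap (Polynomial F) (RatFunc F)) (RatFunc.algebraMap_injective F)
  set G : Fin m → Fin m → (Fin (r + s) → (Fin nV → (RatFunc F))) :=
    fun i j p => f ∘ (Fin.append (a i) (bb j) p) with hG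
  have h1' : ∀ i, LinearIndependent (RatFunc F) (G i i) :=
    fun i => linearIndependent_map_ringHom f (h1 i)
  have h2' : ∀ i j, i < j → ¬ LinearIndependent (RatFunc F) (G i j) :=
    fun i j hij => not_linearIndependent_map_ringHom f (h2 i j hij)
  -- Step 4: a common generic projection C
  obtain ⟨C, hC⟩ := exists_common_generic (fun i => Matrix.of (G i i))
    (fun i => exists_right_inverse_of_rows_linearIndependent _ (h1' i))
  set xK : Fin m → Fin r → (Fin (r + s) → (RatFunc F)) := fun i k => (f ∘ a i k) ᵥ* C with hxK
  set yK : Fin m → Fin s → (Fin (r + s) → (RatFunc F)) := fun j l => (f ∘ bb j l) ᵥ* C with hyK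
  have key : ∀ i j, Matrix.of (Fin.append (xK i) (yK j)) = Matrix.of (G i j) * C := by
    intro i j
    ext p q
    rw [Matrix.mul_apply]
    refine Fin.addCases (fun k => ?_) (fun l => ?_) p
    · simp [hxK, hG, Fin.append_left, Matrix.vecMul, dotProduct, Function.comp]
    · simp [hyK, hG, Fin.append_right, Matrix.vecMul, dotProduct, Function.comp]
  have hdet0 : ∀ i j, i < j → (Matrix.of (Fin.append (xK i) (yK j))).det = 0 := by
    intro i j hij
    rw [key i j]
    have hni := h2' i j hij
    rw [Fintype.not_linearIndependent_iff] at hni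
    obtain ⟨g, hg, p0, hp0⟩ := hni
    have hvm : g ᵥ* Matrix.of (G i j) = 0 := by
      rw [← sum_smul_rows_eq_vecMul]
      exact hg
    have hvm2 : g ᵥ* (Matrix.of (G i j) * C) = 0 := by
      rw [← Matrix.vecMul_vecMul, hvm, Matrix.zero_vecMul]
    by_contra hdz
    have hunit : IsUnit (Matrix.of (G i j) * C).det := isUnit_iff_ne_zero.2 hdz
    have hinv := Matrix.mul_nonsing_inv _ hunit
    apply hp0
    have : g ᵥ* ((Matrix.of (G i j) * C) * (Matrix.of (G i j) * C)⁻¹) = 0 := by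
      rw [← Matrix.vecMul_vecMul, hvm2, Matrix.zero_vecMul]
    rw [hinv, Matrix.vecMul_one] at this
    exact congrFun this p0
  have hdetd : ∀ i, (Matrix.of (Fin.append (xK i) (yK i))).det ≠ 0 := by
    intro i
    rw [key i i]
    exact hC i
  -- Step 5: alternating maps and the triangular independence argument
  set φ : Fin m → AlternatingMap (RatFunc F) (Fin (r + s) → (RatFunc F)) (RatFunc F) (Fin s) :=
    fun i => stackAlt (xK i) with hφ
  have hli : LinearIndependent (RatFunc F) φ := by
    rw [Fintype.linearIndependent_iff]
    intro g hg
    by_contra hne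
    push_neg at hne
    obtain ⟨i0, hi0⟩ := hne
    set T : Finset (Fin m) := Finset.univ.filter (fun i => g i ≠ 0) with hT
    have hTne : T.Nonempty := ⟨i0, by simp [hT, hi0]⟩
    set j := T.max' hTne with hj
    have hgj : g j ≠ 0 := (Finset.mem_filter.1 (T.max'_mem hTne)).2
    have heval : ∑ i, g i * φ i (yK j) = 0 := by
      let ev : (AlternatingMap (RatFunc F) (Fin (r + s) → (RatFunc F)) (RatFunc F) (Fin s)) →ₗ[(RatFunc F)] (RatFunc F) :=
        { toFun := fun ψ => ψ (yK j)
          map_add' := fun ψ ψ' => rfl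
          map_smul' := fun c ψ => rfl }
      have hev := congrArg ev hg
      rw [map_sum, map_zero] at hev
      simpa [ev, smul_eq_mul] using hev
    rw [Finset.sum_eq_single j] at heval
    · exact hgj (by
        have := mul_eq_zero.1 heval
        rcases this with h | h
        · exact h
        · exact absurd h (hdetd j))
    · intro i _ hij
      by_cases hgi : g i = 0
      · rw [hgi, zero_mul]
      · have hiT : i ∈ T := by rw [hT, Finset.mem_filter]; exact ⟨Finset.mem_univ i, hgi⟩
        have hle : i ≤ j := T.le_max' i hiT
        have hlt : i < j := lt_of_le_of_ne hle hij
        rw [hφ]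
        show g i * stackAlt (xK i) (yK j) = 0
        rw [stackAlt_apply, hdet0 i j hlt, mul_zero]
    · intro hj'
      exact absurd (Finset.mem_univ j) hj'
  have hfinal := card_le_choose_of_linearIndependent_alternating hli
  rw [Nat.choose_symm_add]
  exact hfinal
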